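/- The topological complexity of Y equals the homotopic distance between the two projections: TC(Y) = D(pr₁, pr₂), where pr₁, pr₂ : Y × Y → Y. -/

import Mathlib

open unitInterval

/-- Open-cover lifting category: least `n` such that `X` has an open cover by `n+1` open
sets on each of which `f` lifts through `ι` up to homotopy; `⊤` if no such cover exists. -/
noncomputable def liftcatOp {X Y A : Type*} [TopologicalSpace X] [TopologicalSpace Y]
    [TopologicalSpace A] (f : C(X, Y)) (ι : C(A, Y)) : ℕ∞ :=
  sInf {N : ℕ∞ | ∃ n : ℕ, N = n ∧ ∃ U : Fin (n + 1) → Set X,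
    (∀ i, IsOpen (U i)) ∧ (∀ x, ∃ i, x ∈ U i) ∧
    ∀ i, ∃ l : C(U i, A), (ι.comp l).Homotopic (f.restrict (U i))}

/-- Open-cover sectional category. -/
noncomputable def secatOp {X A : Type*} [TopologicalSpace X] [TopologicalSpace A]
    (ι : C(A, X)) : ℕ∞ :=
  liftcatOp (ContinuousMap.id X) ι

/-- Homotopic distance: least `n` such that `X` has an open cover by `n+1` open sets on each
of which `f` and `g` restrict to homotopic maps; `⊤` if no such cover exists. -/
noncomputable def hDist {X Y : Type*} [TopologicalSpace X] [TopologicalSpace Y]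
    (f g : C(X, Y)) : ℕ∞ :=
  sInf {N : ℕ∞ | ∃ n : ℕ, N = n ∧ ∃ U : Fin (n + 1) → Set X,
    (∀ i, IsOpen (U i)) ∧ (∀ x, ∃ i, x ∈ U i) ∧
    ∀ i, (f.restrict (U i)).Homotopic (g.restrict (U i))}

/-- Topological complexity: the sectional category of the free path fibration
`π : Y^I → Y × Y`, `π γ = (γ 0, γ 1)`. -/
noncomputable def TCop (Y : Type*) [TopologicalSpace Y] : ℕ∞ :=
  secatOp (X := Y × Y)
    ⟨fun γ : C(I, Y) => (γ 0, γ 1),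
      (ContinuousEvalConst.continuous_eval_const 0).prodMk
        (ContinuousEvalConst.continuous_eval_const 1)⟩

theorem TCop_eq_hDist_proj (Y : Type*) [TopologicalSpace Y] :
    TCop Y = hDist (⟨Prod.fst, continuous_fst⟩ : C(Y × Y, Y))
      (⟨Prod.snd, continuous_snd⟩ : C(Y × Y, Y)) := by
  unfold TCop secatOp liftcatOp hDist
  congr 1
  ext N
  simp only [Set.mem_setOf_eq]
  set ι : C(C(I, Y), Y × Y) :=
    ⟨fun γ : C(I, Y) => (γ 0, γ 1),
      (ContinuousEvalConst.continuous_eval_const 0).prodMk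
        (ContinuousEvalConst.continuous_eval_const 1)⟩ with hι
  have key : ∀ U : Set (Y × Y),
      (∃ l : C(U, C(I, Y)),
        (ι.comp l).Homotopic ((ContinuousMap.id (Y × Y)).restrict U)) ↔
      ((⟨Prod.fst, continuous_fst⟩ : C(Y × Y, Y)).restrict U).Homotopic
        ((⟨Prod.snd, continuous_snd⟩ : C(Y × Y, Y)).restrict U) := by
    intro U
    constructor
    · rintro ⟨l, ⟨H⟩⟩
      have h1 : ((⟨Prod.fst, continuous_fst⟩ : C(Y × Y, Y)).comp
          (ι.comp l)).Homotopic
          ((⟨Prod.fst, continuous_fst⟩ : C(Y × Y, Y)).comp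
            ((ContinuousMap.id (Y × Y)).restrict U)) :=
        ContinuousMap.Homotopic.comp (ContinuousMap.Homotopic.refl _) ⟨H⟩
      have h2 : ((⟨Prod.snd, continuous_snd⟩ : C(Y × Y, Y)).comp
          (ι.comp l)).Homotopic
          ((⟨Prod.snd, continuous_snd⟩ : C(Y × Y, Y)).comp
            ((ContinuousMap.id (Y × Y)).restrict U)) :=
        ContinuousMap.Homotopic.comp (ContinuousMap.Homotopic.refl _) ⟨H⟩
      have G : ContinuousMap.Homotopy
          ((⟨Prod.fst, continuous_fst⟩ : C(Y × Y, Y)).comp (ι.comp l))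
          ((⟨Prod.snd, continuous_snd⟩ : C(Y × Y, Y)).comp (ι.comp l)) :=
        { toContinuousMap := l.uncurry.comp ContinuousMap.prodSwap
          map_zero_left := fun u => rfl
          map_one_left := fun u => rfl }
      have e1 : ((⟨Prod.fst, continuous_fst⟩ : C(Y × Y, Y)).restrict U) =
          (⟨Prod.fst, continuous_fst⟩ : C(Y × Y, Y)).comp
            ((ContinuousMap.id (Y × Y)).restrict U) := rfl
      have e2 : ((⟨Prod.snd, continuous_snd⟩ : C(Y × Y, Y)).restrict U) =
          (⟨Prod.snd, continuous_snd⟩ : C(Y × Y, Y)).comp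
            ((ContinuousMap.id (Y × Y)).restrict U) := rfl
      rw [e1, e2]
      exact h1.symm.trans ((ContinuousMap.Homotopic.trans ⟨G⟩ h2))
    · rintro ⟨H⟩
      refine ⟨(H.toContinuousMap.comp ContinuousMap.prodSwap).curry, ?_⟩
      have : ι.comp ((H.toContinuousMap.comp ContinuousMap.prodSwap).curry) =
          (ContinuousMap.id (Y × Y)).restrict U := by
        ext u
        · exact H.apply_zero u
        · exact H.apply_one u
      rw [this]
  constructor
  · rintro ⟨n, rfl, U, hopen, hcov, hlift⟩
    exact ⟨n, rfl, U, hopen, hcov, fun i => (key (U i)).1 (hlift i)⟩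
  · rintro ⟨n, rfl, U, hopen, hcov, hhom⟩
    exact ⟨n, rfl, U, hopen, hcov, fun i => (key (U i)).2 (hhom i)⟩
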